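/- Every local lattice Lie algebra carries the structure of a multiplicative Lie conformal algebra: let (g, S) be a local lattice Lie algebra over a field F, and define the multiplicative λ-bracket {a_λ b} := ∑_{n∈ℤ} ⁅Sⁿa, b⁆ λⁿ (a Laurent polynomial in λ with coefficients in g, by locality). Then this λ-bracket satisfies, coefficientwise: (sesquilinearity) ⁅Sⁿ(S(a)), b⁆ = ⁅S^{n+1}a, b⁆ and ⁅Sⁿa, S(b)⁆ = S(⁅S^{n−1}a, b⁆) for all n ∈ ℤ; (skewsymmetry) ⁅Sⁿa, b⁆ = −Sⁿ(⁅S^{−n}b, a⁆) for all n ∈ ℤ; (Jacobi identity) ⁅S^m a, ⁅Sⁿb, c⁆⁆ − ⁅Sⁿb, ⁅S^m a, c⁆⁆ = ⁅Sⁿ(⁅S^{m−n}a, b⁆), c⁆ for all m, n ∈ ℤ and all a, b, c ∈ g. -/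

import Mathlib

/-- every local lattice Lie algebra carries the structure of a multiplicative
Lie conformal algebra.  Let `(g, S)` be a local lattice Lie algebra over `F` (a Lie algebra
`g` with a Lie algebra automorphism `S` such that `⁅Sⁿa, b⁆ = 0` for all but finitely many
`n ∈ ℤ`).  The λ-bracket `{a_λ b} = ∑_n ⁅Sⁿa,b⁆ λⁿ` satisfies, coefficientwise:
sesquilinearity, skewsymmetry and the Jacobi identity. -/
theorem stmt_7 (F : Type*) [Field F] (g : Type*) [LieRing g] [LieAlgebra F g]
    (S : g ≃ₗ[F] g) (hS : ∀ a b : g, S ⁅a, b⁆ = ⁅S a, S b⁆)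
    (hloc : ∀ a b : g, {n : ℤ | ⁅(S ^ n) a, b⁆ ≠ 0}.Finite) :
    (∀ (n : ℤ) (a b : g), ⁅(S ^ n) (S a), b⁆ = ⁅(S ^ (n + 1)) a, b⁆)
    ∧ (∀ (n : ℤ) (a b : g), ⁅(S ^ n) a, S b⁆ = S ⁅(S ^ (n - 1)) a, b⁆)
    ∧ (∀ (n : ℤ) (a b : g), ⁅(S ^ n) a, b⁆ = -((S ^ n) ⁅(S ^ (-n)) b, a⁆))
    ∧ (∀ (m n : ℤ) (a b c : g),
        ⁅(S ^ m) a, ⁅(S ^ n) b, c⁆⁆ - ⁅(S ^ n) b, ⁅(S ^ m) a, c⁆⁆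
          = ⁅(S ^ n) ⁅(S ^ (m - n)) a, b⁆, c⁆) := by
  have mulapp : ∀ (f h : g ≃ₗ[F] g) (x : g), (f * h) x = f (h x) := fun _ _ _ => rfl
  -- inverse compatibility
  have hSinv : ∀ a b : g, S⁻¹ ⁅a, b⁆ = ⁅S⁻¹ a, S⁻¹ b⁆ := by
    intro a b
    apply S.injective
    have hinv : ∀ x : g, S (S⁻¹ x) = x := fun x => S.apply_symm_apply x
    rw [hS, hinv, hinv, hinv]
  -- all integer powers are Lie algebra maps
  have key : ∀ (n : ℤ) (a b : g), (S ^ n) ⁅a, b⁆ = ⁅(S ^ n) a, (S ^ n) b⁆ := by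
    intro n
    induction n using Int.induction_on with
    | zero => simp
    | succ k ih =>
        intro a b
        rw [zpow_add_one S k, mulapp, mulapp, mulapp, hS, ih]
    | pred k ih =>
        intro a b
        rw [zpow_sub_one S (-k), mulapp, mulapp, mulapp, hSinv, ih]
  have comp : ∀ (p q : ℤ) (x : g), (S ^ p) ((S ^ q) x) = (S ^ (p + q)) x := by
    intro p q x
    rw [zpow_add, mulapp]
  have hstep : ∀ (n : ℤ) (a : g), (S ^ n) (S a) = (S ^ (n + 1)) a := by
    intro n a
    have : S a = (S ^ (1 : ℤ)) a := by rw [zpow_one]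
    rw [this, comp]
  refine ⟨fun n a b => by rw [hstep], fun n a b => ?_, fun n a b => ?_, fun m n a b c => ?_⟩
  · have hstep' : ∀ (q : ℤ) (x : g), S ((S ^ q) x) = (S ^ (q + 1)) x := by
      intro q x
      have h1 : S ((S ^ q) x) = (S ^ (1 : ℤ)) ((S ^ q) x) := by rw [zpow_one]
      rw [h1, comp, add_comm]
    rw [hS, hstep', sub_add_cancel]
  · rw [key, comp, add_neg_cancel, zpow_zero]
    have : (1 : g ≃ₗ[F] g) b = b := rfl
    rw [this]
    exact (lie_skew _ _).symm
  · rw [key, comp, add_sub_cancel, lie_lie]
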